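/- Let p be a prime, k ≥ 1, and n ≥ 0 with standard base-p digits n_0, …, n_ℓ. Then the number of k-tuples m ∈ ℕ^k with m_1 + ⋯ + m_k = n such that p does not divide the multinomial coefficient n! / (m_1!⋯m_k!) equals ∏_{i=0}^{ℓ} C(n_i + k − 1, k − 1). -/

import Mathlib

open Finset

private lemma factorial_val {p : ℕ} (hp : p.Prime) (n : ℕ) :
    (p - 1) * padicValNat p (Nat.factorial n) + (p.digits n).sum = n := by
  haveI : Fact p.Prime := ⟨hp⟩
  rw [sub_one_mul_padicValNat_factorial n]
  exact Nat.sub_add_cancel (Nat.digit_sum_le p n)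

private lemma multinomial_val {p : ℕ} {α : Type*} (hp : p.Prime) (s : Finset α) (f : α → ℕ) :
    (p - 1) * padicValNat p (Nat.multinomial s f) + (p.digits (∑ i ∈ s, f i)).sum
      = ∑ i ∈ s, (p.digits (f i)).sum := by
  haveI : Fact p.Prime := ⟨hp⟩
  have hspec := Nat.multinomial_spec s f
  have h1 : padicValNat p (Nat.factorial (∑ i ∈ s, f i)) =
      (∑ i ∈ s, padicValNat p (Nat.factorial (f i))) + padicValNat p (Nat.multinomial s f) := by
    have := congrArg (fun x => x.factorization p) hspec
    rw [Nat.factorization_mul (Finset.prod_ne_zero_iff.mpr fun i _ => (Nat.factorial_pos _).ne')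
        (Nat.multinomial_pos s f).ne',
        Nat.factorization_prod (fun i _ => (Nat.factorial_pos _).ne')] at this
    simpa [Nat.factorization_def _ hp, Finset.sum_apply'] using this.symm
  have h2 : (p - 1) * padicValNat p (Nat.factorial (∑ i ∈ s, f i)) + (p.digits (∑ i ∈ s, f i)).sum
      = ∑ i ∈ s, f i := factorial_val hp _
  have h3 : ∑ i ∈ s, ((p - 1) * padicValNat p (Nat.factorial (f i)) + (p.digits (f i)).sum)
      = ∑ i ∈ s, f i := Finset.sum_congr rfl fun i _ => factorial_val hp _
  rw [Finset.sum_add_distrib, ← Finset.mul_sum] at h3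
  rw [h1, Nat.mul_add] at h2
  omega

private lemma not_dvd_multinomial_iff {p : ℕ} {α : Type*} (hp : p.Prime) (s : Finset α)
    (f : α → ℕ) :
    ¬ p ∣ Nat.multinomial s f ↔
      ∑ i ∈ s, (p.digits (f i)).sum = (p.digits (∑ i ∈ s, f i)).sum := by
  haveI : Fact p.Prime := ⟨hp⟩
  have h := multinomial_val hp s f
  rw [dvd_iff_padicValNat_ne_zero (Nat.multinomial_pos s f).ne', not_ne_iff]
  have h2 := hp.two_le
  constructor
  · intro hv
    rw [hv, Nat.mul_zero, Nat.zero_add] at h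
    exact h.symm
  · intro he
    have h4 : (p - 1) * padicValNat p (Nat.multinomial s f) = 0 := by omega
    rcases Nat.mul_eq_zero.mp h4 with h5 | h5
    · omega
    · exact h5

private lemma digitsum_sum_le {p : ℕ} {α : Type*} (hp : p.Prime) (s : Finset α) (f : α → ℕ) :
    (p.digits (∑ i ∈ s, f i)).sum ≤ ∑ i ∈ s, (p.digits (f i)).sum :=
  (multinomial_val hp s f) ▸ Nat.le_add_left _ _

private lemma digitsum_add_le {p : ℕ} (hp : p.Prime) (a b : ℕ) :
    (p.digits (a + b)).sum ≤ (p.digits a).sum + (p.digits b).sum := by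
  have h := digitsum_sum_le hp (Finset.univ : Finset (Fin 2)) ![a, b]
  simpa [Fin.sum_univ_two] using h

private lemma digitsum_step {p : ℕ} (hp : 1 < p) (x : ℕ) :
    (p.digits x).sum = x % p + (p.digits (x / p)).sum := by
  rcases Nat.eq_zero_or_pos x with rfl | hx
  · simp
  · rw [Nat.digits_def' hp hx]; simp

private lemma carry_step {p : ℕ} (hp : p.Prime) {k : ℕ} (m : Fin k → ℕ) {n : ℕ}
    (hs : ∑ i, m i = n) :
    (¬ p ∣ Nat.multinomial Finset.univ m) ↔
      ((∑ i, m i % p) = n % p ∧ ¬ p ∣ Nat.multinomial Finset.univ (fun i => m i / p)) := by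
  have hp1 : 1 < p := hp.one_lt
  rw [not_dvd_multinomial_iff hp, not_dvd_multinomial_iff hp, hs]
  set r' := ∑ i, m i % p with hr'
  set q' := ∑ i, m i / p with hq'
  set T := ∑ i, (p.digits (m i / p)).sum with hT
  have key : r' + p * q' = n := by
    rw [hr', hq', Finset.mul_sum, ← Finset.sum_add_distrib, ← hs]
    exact Finset.sum_congr rfl fun i _ => Nat.mod_add_div (m i) p
  have hn' : n % p + p * (n / p) = n := Nat.mod_add_div n p
  have hqle : q' ≤ n / p := by
    rw [Nat.le_div_iff_mul_le hp.pos]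
    nlinarith [key]
  set c := n / p - q' with hc
  have hcc : n / p = q' + c := by omega
  have he : p * (n / p) = p * q' + p * c := by rw [hcc, Nat.mul_add]
  have hrc : r' = n % p + p * c := by linarith
  have hsumS : (∑ i, (p.digits (m i)).sum) = r' + T := by
    rw [hr', hT, ← Finset.sum_add_distrib]
    exact Finset.sum_congr rfl fun i _ => digitsum_step hp1 (m i)
  have hSn : (p.digits n).sum = n % p + (p.digits (n / p)).sum := digitsum_step hp1 n
  have hTq : (p.digits q').sum ≤ T := digitsum_sum_le hp _ _
  have hScc : c = 0 → q' = n / p := by omega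
  constructor
  · intro h
    rw [hsumS, hSn, hrc] at h
    have h' : p * c + T = (p.digits (n / p)).sum := by linarith
    have hle : (p.digits (n / p)).sum ≤ (p.digits q').sum + c := by
      calc (p.digits (n / p)).sum = (p.digits (q' + c)).sum := by rw [hcc]
        _ ≤ (p.digits q').sum + (p.digits c).sum := digitsum_add_le hp q' c
        _ ≤ (p.digits q').sum + c := Nat.add_le_add_left (Nat.digit_sum_le p c) _
    have hpc : p * c ≤ c := by linarith
    have h2c : 2 * c ≤ p * c := Nat.mul_le_mul hp.two_le le_rfl
    have hc0 : c = 0 := by linarith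
    have hq'' : q' = n / p := hScc hc0
    rw [hc0, Nat.mul_zero, Nat.add_zero] at hrc
    rw [hc0, Nat.mul_zero, Nat.zero_add] at h'
    exact ⟨hrc, by rw [hq'', h']⟩
  · rintro ⟨h1, h2⟩
    have hpc0 : p * c = 0 := by linarith
    have hc0 : c = 0 := by
      rcases Nat.mul_eq_zero.mp hpc0 with h | h
      · omega
      · exact h
    have hq'' : q' = n / p := hScc hc0
    rw [hsumS, hSn, h1, ← hq'', ← h2]

private lemma stars_bars : ∀ (k r : ℕ),
    ((Fintype.piFinset fun _ : Fin (k + 1) => Finset.range (r + 1)).filter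
      fun m => ∑ i, m i = r).card = (r + k).choose k := by
  intro k
  induction k with
  | zero =>
    intro r
    have hset : ((Fintype.piFinset fun _ : Fin 1 => Finset.range (r + 1)).filter
        fun m => ∑ i, m i = r) = {fun _ => r} := by
      ext m
      simp only [Finset.mem_filter, Fintype.mem_piFinset, Finset.mem_range, Nat.lt_succ_iff,
        Fin.sum_univ_one, Finset.mem_singleton]
      constructor
      · rintro ⟨h1, h2⟩
        funext i
        rw [Subsingleton.elim i 0, h2]
      · rintro rfl
        exact ⟨fun _ => le_rfl, rfl⟩
    rw [hset]
    simp
  | succ k ih =>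
    intro r
    rw [Finset.card_eq_sum_card_fiberwise (f := fun m => m 0) (t := Finset.range (r + 1))
      (fun m hm => by
        change m ∈ Finset.filter _ _ at hm
        simp only [Finset.mem_coe, Finset.mem_filter, Fintype.mem_piFinset, Finset.mem_range] at hm ⊢
        exact hm.1 0)]
    have hfib : ∀ a ∈ Finset.range (r + 1),
        ((((Fintype.piFinset fun _ : Fin (k + 1 + 1) => Finset.range (r + 1)).filter
          fun m => ∑ i, m i = r)).filter fun m => m 0 = a).card
          = (r - a + k).choose k := by
      intro a ha
      rw [Finset.mem_range, Nat.lt_succ_iff] at ha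
      rw [← ih (r - a)]
      refine Finset.card_bij' (fun m _ => Fin.tail m) (fun t _ => Fin.cons a t) ?_ ?_ ?_ ?_
      · intro m hm
        simp only [Finset.mem_filter, Fintype.mem_piFinset, Finset.mem_range,
          Nat.lt_succ_iff] at hm ⊢
        have h1 := hm.1.1
        have h2 := hm.1.2
        have h3 := hm.2
        have hsplit : ∑ i, m i = m 0 + ∑ i, Fin.tail m i := by
          rw [Fin.sum_univ_succ]; rfl
        have htail : ∑ i, Fin.tail m i = r - a := by
          rw [hsplit, h3] at h2; omega
        refine ⟨fun i => ?_, htail⟩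
        calc Fin.tail m i ≤ ∑ j, Fin.tail m j :=
              Finset.single_le_sum (fun j _ => Nat.zero_le _) (Finset.mem_univ i)
          _ ≤ r - a := htail.le
      · intro t ht
        simp only [Finset.mem_filter, Fintype.mem_piFinset, Finset.mem_range,
          Nat.lt_succ_iff] at ht ⊢
        have h1 := ht.1
        have h2 := ht.2
        have hsplit : ∑ i, Fin.cons a t i = a + ∑ i, t i := by
          rw [Fin.sum_univ_succ]; rfl
        constructor
        · constructor
          · intro i
            rcases Fin.eq_zero_or_eq_succ i with rfl | ⟨j, rfl⟩
            · simpa using ha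
            · simp only [Fin.cons_succ]
              exact (h1 j).trans (by omega)
          · rw [hsplit, h2]; omega
        · simp
      · intro m hm
        simp only [Finset.mem_filter] at hm
        show Fin.cons a (Fin.tail m) = m
        rw [← hm.2]
        exact Fin.cons_self_tail m
      · intro t ht
        funext i
        simp [Fin.tail_cons]
    rw [Finset.sum_congr rfl hfib]
    have hre : ∑ a ∈ Finset.range (r + 1), (r - a + k).choose k
        = ∑ a ∈ Finset.range (r + 1), (a + k).choose k := by
      rw [← Finset.sum_range_reflect]
      refine Finset.sum_congr rfl fun a ha => ?_
      rw [Finset.mem_range, Nat.lt_succ_iff] at ha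
      congr 1
      omega
    rw [hre, Nat.sum_range_add_choose]
    rfl

theorem fine_multinomial (p : ℕ) (hp : p.Prime) (k : ℕ) (hk : 1 ≤ k) (n : ℕ) :
    (((Fintype.piFinset fun _ : Fin k => Finset.range (n + 1)).filter
        fun m => (∑ i, m i = n) ∧ ¬ p ∣ Nat.multinomial Finset.univ m).card) =
      ((Nat.digits p n).map fun a => (a + k - 1).choose (k - 1)).prod := by
  induction n using Nat.strong_induction_on with
  | _ n ih =>
  rcases Nat.eq_zero_or_pos n with rfl | hn
  · have hset : ((Fintype.piFinset fun _ : Fin k => Finset.range (0 + 1)).filter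
        fun m => (∑ i, m i = 0) ∧ ¬ p ∣ Nat.multinomial Finset.univ m) = {fun _ => 0} := by
      ext m
      simp only [Finset.mem_filter, Fintype.mem_piFinset, Finset.mem_range, Nat.lt_succ_iff,
        Nat.le_zero, Finset.mem_singleton]
      constructor
      · rintro ⟨h1, _⟩
        funext i
        exact h1 i
      · rintro rfl
        refine ⟨fun _ => rfl, by simp, ?_⟩
        have : Nat.multinomial Finset.univ (fun _ : Fin k => 0) = 1 := by
          simp [Nat.multinomial]
        rw [this]
        exact fun h => hp.ne_one (Nat.dvd_one.mp h)
    rw [hset]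
    simp
  · have hp1 : 1 < p := hp.one_lt
    obtain ⟨k', rfl⟩ : ∃ k', k = k' + 1 := ⟨k - 1, (Nat.succ_pred_eq_of_pos hk).symm⟩
    have hdig : p.digits n = n % p :: p.digits (n / p) := Nat.digits_def' hp1 hn
    rw [hdig, List.map_cons, List.prod_cons, ← ih (n / p) (Nat.div_lt_self hn hp1)]
    have hch : (n % p + (k' + 1) - 1).choose (k' + 1 - 1) = (n % p + k').choose k' := by
      congr 1 <;> omega
    rw [hch, ← stars_bars k' (n % p), ← Finset.card_product]
    refine Finset.card_bij' (fun m _ => (fun j => m j % p, fun j => m j / p))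
      (fun st _ => fun j => p * st.2 j + st.1 j) ?_ ?_ ?_ ?_
    · intro m hm
      simp only [Finset.mem_filter, Fintype.mem_piFinset, Finset.mem_range,
        Nat.lt_succ_iff] at hm
      obtain ⟨h1, h2, h3⟩ := hm
      have hc := (carry_step hp m h2).mp h3
      have key : (∑ j, m j % p) + p * (∑ j, m j / p) = n := by
        rw [Finset.mul_sum, ← Finset.sum_add_distrib, ← h2]
        exact Finset.sum_congr rfl fun j _ => Nat.mod_add_div (m j) p
      have hn' : n % p + p * (n / p) = n := Nat.mod_add_div n p
      have hq : (∑ j, m j / p) = n / p := by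
        have hpq : p * (∑ j, m j / p) = p * (n / p) := by
          rw [hc.1] at key; linarith
        exact Nat.eq_of_mul_eq_mul_left hp.pos hpq
      simp only [Finset.mem_product, Finset.mem_filter, Fintype.mem_piFinset,
        Finset.mem_range, Nat.lt_succ_iff]
      refine ⟨⟨fun j => ?_, hc.1⟩, fun j => ?_, hq, hc.2⟩
      · calc m j % p ≤ ∑ i, m i % p :=
              Finset.single_le_sum (f := fun i => m i % p) (fun i _ => Nat.zero_le _)
                (Finset.mem_univ j)
          _ = n % p := hc.1
      · calc m j / p ≤ ∑ i, m i / p :=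
              Finset.single_le_sum (f := fun i => m i / p) (fun i _ => Nat.zero_le _)
                (Finset.mem_univ j)
          _ = n / p := hq
    · rintro ⟨s, t⟩ ht
      simp only [Finset.mem_product, Finset.mem_filter, Fintype.mem_piFinset,
        Finset.mem_range, Nat.lt_succ_iff] at ht
      obtain ⟨⟨hs1, hs2⟩, ht1, ht2, hnd⟩ := ht
      have hsp : ∀ j, s j < p := fun j => lt_of_le_of_lt (hs1 j) (Nat.mod_lt n hp.pos)
      have hmod : ∀ j, (p * t j + s j) % p = s j := fun j => by
        rw [Nat.mul_add_mod, Nat.mod_eq_of_lt (hsp j)]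
      have hdiv : ∀ j, (p * t j + s j) / p = t j := fun j => by
        rw [Nat.mul_add_div hp.pos, Nat.div_eq_of_lt (hsp j), Nat.add_zero]
      have hmsum : (∑ j, (p * t j + s j)) = n := by
        rw [Finset.sum_add_distrib, ← Finset.mul_sum, ht2, hs2]
        exact Nat.div_add_mod n p
      simp only [Finset.mem_filter, Fintype.mem_piFinset, Finset.mem_range,
        Nat.lt_succ_iff]
      refine ⟨fun j => ?_, hmsum, ?_⟩
      · calc p * t j + s j ≤ p * (n / p) + n % p :=
              Nat.add_le_add (Nat.mul_le_mul_left p (ht1 j)) (hs1 j)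
          _ = n := Nat.div_add_mod n p
      · refine (carry_step hp (fun j => p * t j + s j) hmsum).mpr ⟨?_, ?_⟩
        · rw [Finset.sum_congr rfl fun j _ => hmod j]
          exact hs2
        · have hfe : (fun j => (p * t j + s j) / p) = t := funext fun j => hdiv j
          rw [hfe]
          exact hnd
    · intro m hm
      funext j
      exact Nat.div_add_mod (m j) p
    · rintro ⟨s, t⟩ ht
      simp only [Finset.mem_product, Finset.mem_filter, Fintype.mem_piFinset,
        Finset.mem_range, Nat.lt_succ_iff] at ht
      obtain ⟨⟨hs1, hs2⟩, ht1, ht2, hnd⟩ := ht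
      have hsp : ∀ j, s j < p := fun j => lt_of_le_of_lt (hs1 j) (Nat.mod_lt n hp.pos)
      refine Prod.ext ?_ ?_
      · funext j
        show (p * t j + s j) % p = s j
        rw [Nat.mul_add_mod, Nat.mod_eq_of_lt (hsp j)]
      · funext j
        show (p * t j + s j) / p = t j
        rw [Nat.mul_add_div hp.pos, Nat.div_eq_of_lt (hsp j), Nat.add_zero]
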